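/- arXiv:1806.08940 — 2 statements merged into one kernel-verified Lean document; each statement's English description precedes it below -/
import Mathlib

section
/- Let $\Omega \subset \mathbb{R}^N$ ($N \geq 2$) be a measurable set, $0 < 2s < N$, and $1 < p < 2$. Assume the kernel $K(x,y) = |x-y|^{-(N-2s)}$ satisfies $K \in L^{p/(p-1)}(\Omega \times \Omega)$, and set $S = \|K\|_{L^{p/(p-1)}(\Omega \times \Omega)}$. Suppose $\omega \in L^{p/(2-p)}(\Omega)$ and $u \in L^{p/(p-1)}(\Omega)$, $u \not\equiv 0$, satisfies $u(x) = \int_{\Omega} \frac{\omega(y) u(y)}{|x-y|^{N-2s}}\,dy$ for a.e. $x \in \Omega$. Then $\|\omega\|_{L^{p/(2-p)}(\Omega)} \geq \frac{1}{S}$. -/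
open Real MeasureTheory

lemma memLp_of_int_rpow {α : Type*} [MeasurableSpace α] {μ : Measure α} {f : α → ℝ} {c : ℝ}
    (hc : 0 < c) (hm : AEStronglyMeasurable f μ)
    (h : Integrable (fun x => |f x| ^ c) μ) : MemLp f (ENNReal.ofReal c) μ := by
  rw [← memLp_norm_rpow_iff (q := ENNReal.ofReal c) hm
      (ENNReal.ofReal_pos.mpr hc).ne' ENNReal.ofReal_ne_top,
    ENNReal.div_self (ENNReal.ofReal_pos.mpr hc).ne' ENNReal.ofReal_ne_top,
    memLp_one_iff_integrable]
  simpa [ENNReal.toReal_ofReal hc.le, Real.norm_eq_abs] using h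

theorem lyapunov_riesz_RN (N : ℕ) (hN : 2 ≤ N) (s p : ℝ)
    (hs : 0 < 2 * s) (hsN : 2 * s < N) (hp1 : 1 < p) (hp2 : p < 2)
    (Ω : Set (EuclideanSpace ℝ (Fin N))) (hΩ : MeasurableSet Ω)
    (ω u : EuclideanSpace ℝ (Fin N) → ℝ)
    (hK : IntegrableOn
      (fun z : EuclideanSpace ℝ (Fin N) × EuclideanSpace ℝ (Fin N) =>
        (‖z.1 - z.2‖ ^ (-((N : ℝ) - 2 * s))) ^ (p / (p - 1))) (Ω ×ˢ Ω))
    (S : ℝ)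
    (hS : S = (∫ z in Ω ×ˢ Ω,
        (‖z.1 - z.2‖ ^ (-((N : ℝ) - 2 * s))) ^ (p / (p - 1))) ^ ((p - 1) / p))
    (hω : IntegrableOn (fun y => |ω y| ^ (p / (2 - p))) Ω)
    (hu : IntegrableOn (fun y => |u y| ^ (p / (p - 1))) Ω)
    (hu0 : ¬ u =ᵐ[volume.restrict Ω] 0)
    (heq : ∀ᵐ x ∂volume.restrict Ω,
      u x = ∫ y in Ω, ω y * u y / ‖x - y‖ ^ ((N : ℝ) - 2 * s)) :
    (∫ y in Ω, |ω y| ^ (p / (2 - p))) ^ ((2 - p) / p) ≥ 1 / S := by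
  set μ : Measure (EuclideanSpace ℝ (Fin N)) := volume.restrict Ω with hμ
  set q : ℝ := p / (p - 1) with hqdef
  set r : ℝ := p / (2 - p) with hrdef
  set e : ℝ := (N : ℝ) - 2 * s with hedef
  set v : EuclideanSpace ℝ (Fin N) → ℝ := fun x => |u x| with hvdef
  set w : EuclideanSpace ℝ (Fin N) → ℝ := fun x => |ω x| with hwdef
  set K : EuclideanSpace ℝ (Fin N) → EuclideanSpace ℝ (Fin N) → ℝ := fun x y => ‖x - y‖ ^ (-e) with hKdef
  have hp0 : (0:ℝ) < p := lt_trans one_pos hp1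
  have hp1' : (0:ℝ) < p - 1 := by linarith
  have hp2' : (0:ℝ) < 2 - p := by linarith
  have hq0 : 0 < q := div_pos hp0 hp1'
  have hq1 : 1 < q := by
    rw [hqdef, lt_div_iff₀ hp1']; linarith
  have hr0 : 0 < r := div_pos hp0 hp2'
  have hpq : p.HolderConjugate q := Real.HolderConjugate.conjExponent hp1
  have hθ : (1/(2-p)).HolderConjugate (1/(p-1)) := by
    constructor
    · rw [inv_one, one_div, one_div, inv_inv, inv_inv]; ring
    · positivity
    · positivity
  -- measurability
  have hvm : AEMeasurable v μ := by
    have h := hu.aemeasurable.pow_const (1/q)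
    refine h.congr (Filter.Eventually.of_forall fun y => ?_)
    show (|u y| ^ q) ^ (1/q) = |u y|
    rw [← Real.rpow_mul (abs_nonneg _), mul_one_div, div_self hq0.ne', Real.rpow_one]
  have hwm : AEMeasurable w μ := by
    have h := hω.aemeasurable.pow_const (1/r)
    refine h.congr (Filter.Eventually.of_forall fun y => ?_)
    show (|ω y| ^ r) ^ (1/r) = |ω y|
    rw [← Real.rpow_mul (abs_nonneg _), mul_one_div, div_self hr0.ne', Real.rpow_one]
  have hKm : ∀ x : EuclideanSpace ℝ (Fin N), Measurable (fun y => K x y) := fun x =>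
    ((measurable_const.sub measurable_id).norm).pow_const _
  -- MemLp facts
  have hv_mem : MemLp v (ENNReal.ofReal q) μ :=
    memLp_of_int_rpow hq0 hvm.aestronglyMeasurable
      (by simpa [hvdef, abs_abs] using hu.integrable)
  have hw_mem : MemLp w (ENNReal.ofReal r) μ :=
    memLp_of_int_rpow hr0 hwm.aestronglyMeasurable
      (by simpa [hwdef, abs_abs] using hω.integrable)
  have hwv_mem : MemLp (fun x => w x * v x) (ENNReal.ofReal p) μ := by
    have h := hv_mem.smul (φ := w) hw_mem (r := ENNReal.ofReal p) (hpqr := ?_)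
    · exact h
    · refine ⟨?_⟩
      rw [inv_eq_one_div, inv_eq_one_div, inv_eq_one_div]; symm
      rw [← ENNReal.ofReal_one, ← ENNReal.ofReal_div_of_pos hp0,
        ← ENNReal.ofReal_div_of_pos hr0, ← ENNReal.ofReal_div_of_pos hq0,
        ← ENNReal.ofReal_add (by positivity) (by positivity)]
      congr 1
      rw [hqdef, hrdef]
      field_simp
      ring
  have hwvp_int : Integrable (fun x => (w x * v x) ^ p) μ := by
    have h := hwv_mem.integrable_norm_rpow (ENNReal.ofReal_pos.mpr hp0).ne' ENNReal.ofReal_ne_top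
    refine h.congr (Filter.Eventually.of_forall fun x => ?_)
    show ‖(w • v) x‖ ^ (ENNReal.ofReal p).toReal = (w x * v x) ^ p
    rw [ENNReal.toReal_ofReal hp0.le]
    simp [Real.norm_eq_abs, abs_mul, abs_abs, hwdef, hvdef]
  -- Hölder 2 : ∫ (w v)^p ≤ (∫ w^r)^(2-p) * (∫ v^q)^(p-1)
  have hA : ∫ x, (w x * v x) ^ p ∂μ ≤
      (∫ x, w x ^ r ∂μ) ^ (2 - p) * (∫ x, v x ^ q ∂μ) ^ (p - 1) := by
    have hf2 : MemLp (fun x => w x ^ p) (ENNReal.ofReal (1/(2-p))) μ := by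
      refine memLp_of_int_rpow (by positivity) ((hwm.pow_const p).aestronglyMeasurable) ?_
      refine Integrable.congr hω (Filter.Eventually.of_forall fun y => ?_)
      show |ω y| ^ r = |(|ω y| ^ p)| ^ (1/(2-p))
      rw [abs_of_nonneg (Real.rpow_nonneg (abs_nonneg _) _), ← Real.rpow_mul (abs_nonneg _),
        mul_one_div, hrdef]
    have hg2 : MemLp (fun x => v x ^ p) (ENNReal.ofReal (1/(p-1))) μ := by
      refine memLp_of_int_rpow (by positivity) ((hvm.pow_const p).aestronglyMeasurable) ?_
      refine Integrable.congr hu (Filter.Eventually.of_forall fun y => ?_)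
      show |u y| ^ q = |(|u y| ^ p)| ^ (1/(p-1))
      rw [abs_of_nonneg (Real.rpow_nonneg (abs_nonneg _) _), ← Real.rpow_mul (abs_nonneg _),
        mul_one_div, hqdef]
    have h := integral_mul_le_Lp_mul_Lq_of_nonneg hθ
      (Filter.Eventually.of_forall fun x => Real.rpow_nonneg (abs_nonneg _) _)
      (Filter.Eventually.of_forall fun x => Real.rpow_nonneg (abs_nonneg _) _) hf2 hg2
    calc ∫ x, (w x * v x) ^ p ∂μ = ∫ x, (w x ^ p) * (v x ^ p) ∂μ := by
          congr 1; funext x; exact Real.mul_rpow (abs_nonneg _) (abs_nonneg _)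
      _ ≤ (∫ x, (w x ^ p) ^ (1/(2-p)) ∂μ) ^ (1/(1/(2-p))) *
          (∫ x, (v x ^ p) ^ (1/(p-1)) ∂μ) ^ (1/(1/(p-1))) := h
      _ = (∫ x, w x ^ r ∂μ) ^ (2 - p) * (∫ x, v x ^ q ∂μ) ^ (p - 1) := by
          have E1 : (∫ x, (w x ^ p) ^ (1/(2-p)) ∂μ) = ∫ x, w x ^ r ∂μ :=
            integral_congr_ae (Filter.Eventually.of_forall fun x => by
              show (|ω x| ^ p) ^ (1/(2-p)) = |ω x| ^ r
              rw [hrdef, ← Real.rpow_mul (abs_nonneg _), mul_one_div])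
          have E2 : (∫ x, (v x ^ p) ^ (1/(p-1)) ∂μ) = ∫ x, v x ^ q ∂μ :=
            integral_congr_ae (Filter.Eventually.of_forall fun x => by
              show (|u x| ^ p) ^ (1/(p-1)) = |u x| ^ q
              rw [hqdef, ← Real.rpow_mul (abs_nonneg _), mul_one_div])
          rw [E1, E2, one_div_one_div, one_div_one_div]
  -- product measure setup
  have hprod : (volume : Measure (EuclideanSpace ℝ (Fin N) × EuclideanSpace ℝ (Fin N))).restrict (Ω ×ˢ Ω) = μ.prod μ := by
    rw [hμ, Measure.prod_restrict, ← Measure.volume_eq_prod]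
  have hK' : Integrable (fun z : EuclideanSpace ℝ (Fin N) × EuclideanSpace ℝ (Fin N) => (K z.1 z.2) ^ q) (μ.prod μ) := by
    rw [← hprod]; exact hK
  -- Hölder 1, a.e. pointwise
  have hB : ∀ᵐ x ∂μ, v x ^ q ≤
      (∫ t, (w t * v t) ^ p ∂μ) ^ (q/p) * ∫ y, (K x y) ^ q ∂μ := by
    filter_upwards [heq, hK'.prod_right_ae] with x hx hKx
    have hnn : 0 ≤ ∫ y, (K x y) ^ q ∂μ :=
      integral_nonneg fun y => Real.rpow_nonneg (Real.rpow_nonneg (norm_nonneg _) _) _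
    have hKx_mem : MemLp (fun y => K x y) (ENNReal.ofReal q) μ := by
      refine memLp_of_int_rpow hq0 (hKm x).aestronglyMeasurable ?_
      refine hKx.congr (Filter.Eventually.of_forall fun y => ?_)
      show (K x y) ^ q = |K x y| ^ q
      rw [abs_of_nonneg (Real.rpow_nonneg (norm_nonneg _) _)]
    have h1 : v x ≤ ∫ y, (w y * v y) * K x y ∂μ := by
      rw [hvdef]
      calc |u x| = |∫ y, ω y * u y / ‖x - y‖ ^ e ∂μ| := by rw [hx]
        _ ≤ ∫ y, |ω y * u y / ‖x - y‖ ^ e| ∂μ := by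
            simpa only [Real.norm_eq_abs] using
              norm_integral_le_integral_norm (fun y => ω y * u y / ‖x - y‖ ^ e) (μ := μ)
        _ = ∫ y, (w y * v y) * K x y ∂μ := by
            refine integral_congr_ae (Filter.Eventually.of_forall fun y => ?_)
            show |ω y * u y / ‖x - y‖ ^ e| = (|ω y| * |u y|) * ‖x - y‖ ^ (-e)
            rw [Real.rpow_neg (norm_nonneg _), abs_div, abs_mul,
              abs_of_nonneg (Real.rpow_nonneg (norm_nonneg _) _), div_eq_mul_inv]
    have h2 : ∫ y, (w y * v y) * K x y ∂μ ≤
        (∫ t, (w t * v t) ^ p ∂μ) ^ (1/p) * (∫ y, (K x y) ^ q ∂μ) ^ (1/q) :=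
      integral_mul_le_Lp_mul_Lq_of_nonneg hpq
        (Filter.Eventually.of_forall fun t => mul_nonneg (abs_nonneg _) (abs_nonneg _))
        (Filter.Eventually.of_forall fun y => Real.rpow_nonneg (norm_nonneg _) _)
        hwv_mem hKx_mem
    have h3 : v x ^ q ≤ ((∫ t, (w t * v t) ^ p ∂μ) ^ (1/p) * (∫ y, (K x y) ^ q ∂μ) ^ (1/q)) ^ q :=
      Real.rpow_le_rpow (abs_nonneg _) (h1.trans h2) hq0.le
    refine h3.trans_eq ?_
    rw [Real.mul_rpow (Real.rpow_nonneg (integral_nonneg fun t =>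
        Real.rpow_nonneg (mul_nonneg (abs_nonneg _) (abs_nonneg _)) _) _)
        (Real.rpow_nonneg hnn _),
      ← Real.rpow_mul (integral_nonneg fun t =>
        Real.rpow_nonneg (mul_nonneg (abs_nonneg _) (abs_nonneg _)) _),
      one_div_mul_eq_div,
      ← Real.rpow_mul hnn, one_div_mul_cancel hq0.ne', Real.rpow_one]
  -- integrate
  set I : ℝ := ∫ z in Ω ×ˢ Ω, (‖z.1 - z.2‖ ^ (-e)) ^ q with hIdef
  have hIprod : I = ∫ z, (K z.1 z.2) ^ q ∂(μ.prod μ) := by rw [hIdef, hprod]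
  have hInn : 0 ≤ I := by
    rw [hIprod]
    exact integral_nonneg fun z => Real.rpow_nonneg (Real.rpow_nonneg (norm_nonneg _) _) _
  set A : ℝ := ∫ x, v x ^ q ∂μ with hAdef
  set B : ℝ := ∫ x, (w x * v x) ^ p ∂μ with hBdef
  have hBnn : 0 ≤ B := integral_nonneg fun t =>
    Real.rpow_nonneg (mul_nonneg (abs_nonneg _) (abs_nonneg _)) _
  have hC : A ≤ B ^ (q/p) * I := by
    have hint : Integrable (fun x => B ^ (q/p) * ∫ y, (K x y) ^ q ∂μ) μ := by
      have := hK'.integral_prod_left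
      exact this.const_mul _
    have hmono := integral_mono_ae (by simpa [hvdef, abs_abs] using hu.integrable : Integrable (fun x => v x ^ q) μ) hint hB
    refine hmono.trans_eq ?_
    rw [integral_const_mul, hIprod, MeasureTheory.integral_prod _ hK']
  -- positivity of A
  have hAint : Integrable (fun x => v x ^ q) μ := by simpa [hvdef, abs_abs] using hu.integrable
  have hApos : 0 < A := by
    rcases lt_or_eq_of_le (integral_nonneg fun x => Real.rpow_nonneg (abs_nonneg _) _ :
        (0:ℝ) ≤ A) with h | h
    · exact h
    · exfalso
      apply hu0
      have h0 := (integral_eq_zero_iff_of_nonneg_ae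
        (Filter.Eventually.of_forall fun x => Real.rpow_nonneg (abs_nonneg _) _) hAint).1 h.symm
      filter_upwards [h0] with x hx
      simp only [Pi.zero_apply] at hx ⊢
      by_contra hne
      have hpos : 0 < |u x| ^ q := Real.rpow_pos_of_pos (abs_pos.mpr hne) _
      rw [hx] at hpos
      exact lt_irrefl 0 hpos
  -- combine
  set W : ℝ := (∫ y in Ω, |ω y| ^ r) ^ ((2 - p) / p) with hWdef
  have hWrnn : 0 ≤ ∫ x, w x ^ r ∂μ := integral_nonneg fun x => Real.rpow_nonneg (abs_nonneg _) _
  have hWnn : 0 ≤ W := Real.rpow_nonneg (integral_nonneg fun x => Real.rpow_nonneg (abs_nonneg _) _) _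
  have hqp : q / p = 1 / (p - 1) := by rw [hqdef]; field_simp; try ring
  have hD : A ≤ W ^ q * A * I := by
    have h1 : B ^ (q/p) ≤ ((∫ x, w x ^ r ∂μ) ^ (2 - p) * A ^ (p - 1)) ^ (q/p) :=
      Real.rpow_le_rpow hBnn hA (by positivity)
    have h2 : ((∫ x, w x ^ r ∂μ) ^ (2 - p) * A ^ (p - 1)) ^ (q/p) = W ^ q * A := by
      rw [Real.mul_rpow (Real.rpow_nonneg hWrnn _) (Real.rpow_nonneg hApos.le _),
        ← Real.rpow_mul hWrnn, ← Real.rpow_mul hApos.le, hqp]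
      have e1 : (2 - p) * (1 / (p - 1)) = (2 - p) / p * q := by
        rw [hqdef]; field_simp; try ring
      have e2 : (p - 1) * (1 / (p - 1)) = 1 := by field_simp
      rw [e1, e2, Real.rpow_one, Real.rpow_mul hWrnn, hWdef]
      try rfl
    calc A ≤ B ^ (q/p) * I := hC
      _ ≤ W ^ q * A * I := by
          rw [h2] at h1
          exact mul_le_mul_of_nonneg_right h1 hInn
  have h1le : 1 ≤ W ^ q * I := by
    by_contra hlt
    push_neg at hlt
    have hcon : W ^ q * A * I < A := by
      calc W ^ q * A * I = (W ^ q * I) * A := by ring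
        _ < 1 * A := mul_lt_mul_of_pos_right hlt hApos
        _ = A := one_mul A
    exact absurd hD (not_le.mpr hcon)
  have hSnn : 0 ≤ S := by rw [hS]; exact Real.rpow_nonneg hInn _
  have hSq : S ^ q = I := by
    rw [hS, ← Real.rpow_mul hInn]
    have h1 : (p-1)/p * q = 1 := by rw [hqdef]; field_simp
    rw [h1, Real.rpow_one]
  have hWS : 1 ≤ (W * S) ^ q := by
    rw [Real.mul_rpow hWnn hSnn, hSq]; exact h1le
  have hWS1 : 1 ≤ W * S := by
    by_contra hlt
    push_neg at hlt
    exact absurd hWS (not_le.mpr (Real.rpow_lt_one (mul_nonneg hWnn hSnn) hlt hq0))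
  have hSpos : 0 < S := by
    rcases lt_or_eq_of_le hSnn with h | h
    · exact h
    · exfalso
      rw [← h, mul_zero] at hWS1
      linarith
  rw [ge_iff_le, div_le_iff₀ hSpos]
  exact hWS1
end

section
/- Let $\Omega \subset \mathbb{R}^N$ ($N \geq 2$) have finite measure, $0 < 2s < N$, $1 < p < 2$, and suppose $K(x,y) = |x-y|^{-(N-2s)}$ lies in $L^{p/(p-1)}(\Omega \times \Omega)$ with norm $S$. If $\lambda_1(\Omega) = \sup_{u \neq 0} \frac{\int_\Omega \int_\Omega \frac{u(x)u(y)}{|x-y|^{N-2s}}\,dx\,dy}{\|u\|_{L^2(\Omega)}^2}$ is the first eigenvalue of the Riesz potential $\mathfrak{R}u(x) = \int_\Omega \frac{u(y)}{|x-y|^{N-2s}}dy$, then $\lambda_1(\Omega) \leq S\, |\Omega|^{\frac{2-p}{p}}$. -/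
open Real MeasureTheory ENNReal

private lemma memLp_of_integrable_rpow {α : Type*} [MeasurableSpace α] {μ : Measure α}
    {f : α → ℝ} {q : ℝ} (hq : 0 < q) (hf : AEStronglyMeasurable f μ)
    (h : Integrable (fun x => ‖f x‖ ^ q) μ) : MemLp f (ENNReal.ofReal q) μ := by
  have hq0 : ENNReal.ofReal q ≠ 0 := by
    simp [ENNReal.ofReal_eq_zero, not_le, hq]
  have hqt : ENNReal.ofReal q ≠ ∞ := ENNReal.ofReal_ne_top
  refine (memLp_norm_rpow_iff (p := ENNReal.ofReal q) hf hq0 hqt).1 ?_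
  rw [ENNReal.div_self hq0 hqt, memLp_one_iff_integrable]
  refine h.congr ?_
  filter_upwards with x
  rw [ENNReal.toReal_ofReal hq.le]

theorem riesz_first_eigenvalue_bound (N : ℕ) (hN : 2 ≤ N) (s p : ℝ)
    (hs : 0 < 2 * s) (hsN : 2 * s < N) (hp1 : 1 < p) (hp2 : p < 2)
    (Ω : Set (EuclideanSpace ℝ (Fin N))) (hΩ : MeasurableSet Ω)
    (hΩfin : volume Ω < ⊤)
    (hK : IntegrableOn
      (fun z : EuclideanSpace ℝ (Fin N) × EuclideanSpace ℝ (Fin N) =>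
        (‖z.1 - z.2‖ ^ (-((N : ℝ) - 2 * s))) ^ (p / (p - 1))) (Ω ×ˢ Ω))
    (S : ℝ)
    (hS : S = (∫ z in Ω ×ˢ Ω,
        (‖z.1 - z.2‖ ^ (-((N : ℝ) - 2 * s))) ^ (p / (p - 1))) ^ ((p - 1) / p))
    (lam1 : ℝ)
    (hlam : lam1 = sSup {r : ℝ | ∃ u : EuclideanSpace ℝ (Fin N) → ℝ,
        (∫ x in Ω, (u x) ^ 2) ≠ 0 ∧
        r = (∫ x in Ω, ∫ y in Ω, u x * u y / ‖x - y‖ ^ ((N : ℝ) - 2 * s)) /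
              (∫ x in Ω, (u x) ^ 2)}) :
    lam1 ≤ S * (volume Ω).toReal ^ ((2 - p) / p) := by
  classical
  set M : ℝ := (volume Ω).toReal with hMdef
  set μ : Measure (EuclideanSpace ℝ (Fin N)) := volume.restrict Ω with hμdef
  set ν : Measure (EuclideanSpace ℝ (Fin N) × EuclideanSpace ℝ (Fin N)) := μ.prod μ with hνdef
  have hM0 : 0 ≤ M := ENNReal.toReal_nonneg
  haveI : IsFiniteMeasure μ := ⟨by rw [hμdef, Measure.restrict_apply_univ]; exact hΩfin⟩
  -- basic exponent facts
  have hp0 : (0:ℝ) < p := by linarith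
  have hp0' : p ≠ 0 := hp0.ne'
  have h2p : (0:ℝ) < 2 - p := by linarith
  have hp1' : (0:ℝ) < p - 1 := by linarith
  have hp'pos : (0:ℝ) < p / (p - 1) := div_pos hp0 hp1'
  have hpq' : p.HolderConjugate (p / (p - 1)) :=
    (Real.holderConjugate_iff_eq_conjExponent hp1).2 rfl
  -- the kernel
  set K : EuclideanSpace ℝ (Fin N) × EuclideanSpace ℝ (Fin N) → ℝ :=
    fun z => ‖z.1 - z.2‖ ^ (-((N : ℝ) - 2 * s)) with hKdef
  have hKnn : ∀ z, 0 ≤ K z := fun z => Real.rpow_nonneg (norm_nonneg _) _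
  have hKmeas : Measurable K :=
    ((measurable_fst.sub measurable_snd).norm).pow measurable_const
  have hνrestrict :
      (volume : Measure (EuclideanSpace ℝ (Fin N) × EuclideanSpace ℝ (Fin N))).restrict
        (Ω ×ˢ Ω) = ν := by
    rw [hνdef, hμdef, Measure.prod_restrict, ← Measure.volume_eq_prod]
  have hKint : Integrable (fun z => K z ^ (p / (p - 1))) ν := by
    rw [← hνrestrict]; exact hK
  have hSnn : 0 ≤ S := by
    rw [hS]
    exact Real.rpow_nonneg
      (integral_nonneg fun z => Real.rpow_nonneg (Real.rpow_nonneg (norm_nonneg _) _) _) _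
  have hCnn : 0 ≤ S * M ^ ((2 - p) / p) :=
    mul_nonneg hSnn (Real.rpow_nonneg hM0 _)
  have hKMem : MemLp K (ENNReal.ofReal (p / (p - 1))) ν := by
    refine memLp_of_integrable_rpow hp'pos hKmeas.aestronglyMeasurable ?_
    refine hKint.congr ?_
    filter_upwards with z
    rw [Real.norm_of_nonneg (hKnn z)]
  rw [hlam]
  refine Real.sSup_le ?_ hCnn
  rintro r ⟨u, hu, rfl⟩
  -- the denominator
  set D : ℝ := ∫ x, u x ^ 2 ∂μ with hDdef
  have hu2int : Integrable (fun x => u x ^ 2) μ := by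
    by_contra h
    exact hu (integral_undef h)
  have hD0 : 0 < D := lt_of_le_of_ne (integral_nonneg fun x => sq_nonneg _) (Ne.symm hu)
  -- a measurable nonnegative version of |u|
  obtain ⟨v, hv_meas, hv_eq⟩ := hu2int.aestronglyMeasurable
  set g : EuclideanSpace ℝ (Fin N) → ℝ := fun x => Real.sqrt (v x) with hgdef
  have hg_meas : StronglyMeasurable g :=
    Real.continuous_sqrt.comp_stronglyMeasurable hv_meas
  have hg_nonneg : ∀ x, 0 ≤ g x := fun x => Real.sqrt_nonneg _
  have hgu : ∀ᵐ x ∂μ, g x = |u x| := by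
    filter_upwards [hv_eq] with x hx
    rw [hgdef]
    simp only
    rw [← hx, Real.sqrt_sq_eq_abs]
  have hg2 : (fun x => g x ^ 2) =ᵐ[μ] fun x => u x ^ 2 := by
    filter_upwards [hgu] with x hx
    rw [hx, sq_abs]
  have hg2int : Integrable (fun x => g x ^ 2) μ := hu2int.congr hg2.symm
  have hgD : ∫ x, g x ^ 2 ∂μ = D := integral_congr_ae hg2
  have hgL2 : MemLp g 2 μ :=
    (memLp_two_iff_integrable_sq hg_meas.aestronglyMeasurable).2 hg2int
  have hgLp : MemLp g (ENNReal.ofReal p) μ := by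
    refine hgL2.mono_exponent ?_
    calc ENNReal.ofReal p ≤ ENNReal.ofReal 2 := ENNReal.ofReal_le_ofReal hp2.le
    _ = 2 := by norm_num
  have hgp_int : Integrable (fun x => g x ^ p) μ := by
    have h := hgLp.integrable_norm_rpow (by simp [hp0, not_le]) ENNReal.ofReal_ne_top
    refine h.congr ?_
    filter_upwards with x
    rw [ENNReal.toReal_ofReal hp0.le, Real.norm_of_nonneg (hg_nonneg x)]
  set Ip : ℝ := ∫ x, g x ^ p ∂μ with hIpdef
  have hIp0 : 0 ≤ Ip := integral_nonneg fun x => Real.rpow_nonneg (hg_nonneg x) _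
  -- One-variable Hölder : Ip ≤ D ^ (p/2) * M ^ ((2-p)/2)
  have hab : (2 / p).HolderConjugate (2 / (2 - p)) := by
    constructor
    · rw [inv_div, inv_div, inv_one]
      ring
    · positivity
    · exact div_pos two_pos h2p
  have hIp : Ip ≤ D ^ (p / 2) * M ^ ((2 - p) / 2) := by
    have hfmem : MemLp (fun x => g x ^ p) (ENNReal.ofReal (2 / p)) μ := by
      refine memLp_of_integrable_rpow (by positivity) hgp_int.aestronglyMeasurable ?_
      refine hg2int.congr ?_
      filter_upwards with x
      have hxx : (g x ^ p) ^ (2 / p) = g x ^ 2 := by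
        rw [← Real.rpow_natCast (g x) 2, ← Real.rpow_mul (hg_nonneg x)]
        congr 1
        field_simp
        norm_num
      simp only [Real.norm_of_nonneg (Real.rpow_nonneg (hg_nonneg x) p), hxx]
    have hgmem : MemLp (fun _ : EuclideanSpace ℝ (Fin N) => (1:ℝ))
        (ENNReal.ofReal (2 / (2 - p))) μ := memLp_const 1
    have holder := integral_mul_le_Lp_mul_Lq_of_nonneg hab
      (Filter.Eventually.of_forall fun x => Real.rpow_nonneg (hg_nonneg x) p)
      (Filter.Eventually.of_forall fun _ => zero_le_one) hfmem hgmem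
    have hL : ∫ a, g a ^ p * 1 ∂μ = Ip := by simp [hIpdef]
    have hmid : ∫ a, (g a ^ p) ^ (2 / p) ∂μ = D := by
      rw [← hgD]
      refine integral_congr_ae (Filter.Eventually.of_forall fun x => ?_)
      show (g x ^ p) ^ (2 / p) = g x ^ 2
      rw [← Real.rpow_natCast (g x) 2, ← Real.rpow_mul (hg_nonneg x)]
      congr 1
      field_simp
      norm_num
    have hone : ∫ a, (1:ℝ) ^ (2 / (2 - p)) ∂μ = M := by
      simp only [Real.one_rpow, integral_const, smul_eq_mul, mul_one]
      rw [hμdef, measureReal_def, Measure.restrict_apply_univ, hMdef]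
    rw [hL, hmid, hone, one_div_div, one_div_div] at holder
    exact holder
  -- Product Hölder setup
  set F : EuclideanSpace ℝ (Fin N) × EuclideanSpace ℝ (Fin N) → ℝ :=
    fun z => g z.1 * g z.2 with hFdef
  have hFnn : ∀ z, 0 ≤ F z := fun z => mul_nonneg (hg_nonneg _) (hg_nonneg _)
  have hFmeas : AEStronglyMeasurable F ν :=
    ((hg_meas.measurable.comp measurable_fst).mul
      (hg_meas.measurable.comp measurable_snd)).aestronglyMeasurable
  have hFp_int : Integrable (fun z => ‖F z‖ ^ p) ν := by
    have h := hgp_int.mul_prod hgp_int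
    refine h.congr ?_
    filter_upwards with z
    rw [Real.norm_of_nonneg (hFnn z), hFdef]
    simp only
    rw [← Real.mul_rpow (hg_nonneg _) (hg_nonneg _)]
  have hFMem : MemLp F (ENNReal.ofReal p) ν := memLp_of_integrable_rpow hp0 hFmeas hFp_int
  have hFp_eq : ∫ z, F z ^ p ∂ν = Ip * Ip := by
    rw [show (fun z : EuclideanSpace ℝ (Fin N) × EuclideanSpace ℝ (Fin N) => F z ^ p)
        = fun z => g z.1 ^ p * g z.2 ^ p by
      funext z
      rw [hFdef]
      simp only
      rw [← Real.mul_rpow (hg_nonneg _) (hg_nonneg _)]]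
    exact integral_prod_mul (fun x => g x ^ p) (fun y => g y ^ p)
  -- Integrability of the full product
  have hrel : (1 : ℝ≥0∞) / 1 =
      1 / ENNReal.ofReal (p / (p - 1)) + 1 / ENNReal.ofReal p := by
    rw [one_div, one_div, one_div, inv_one, hpq'.symm.inv_add_inv_ennreal]
  have hKF_int : Integrable (fun z => K z * F z) ν :=
    (memLp_one_iff_integrable.1 (hFMem.smul hKMem (hpqr := ⟨by simpa [one_div] using hrel.symm⟩))).congr
      (Filter.Eventually.of_forall fun z => rfl)
  set G : EuclideanSpace ℝ (Fin N) × EuclideanSpace ℝ (Fin N) → ℝ :=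
    fun z => F z * K z with hGdef
  have hG_int : Integrable G ν :=
    hKF_int.congr (Filter.Eventually.of_forall fun z => mul_comm _ _)
  have hH_int : Integrable (fun x => ∫ y, G (x, y) ∂μ) μ := hG_int.integral_prod_left
  -- pointwise a.e. bound of inner integrals
  have hbound : ∀ᵐ x ∂μ,
      ‖∫ y, u x * u y / ‖x - y‖ ^ ((N:ℝ) - 2 * s) ∂μ‖ ≤ ∫ y, G (x, y) ∂μ := by
    filter_upwards [hgu] with x hx
    refine (norm_integral_le_integral_norm _).trans_eq ?_
    refine integral_congr_ae ?_
    filter_upwards [hgu] with y hy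
    rw [Real.norm_eq_abs, abs_div, abs_mul,
      abs_of_nonneg (Real.rpow_nonneg (norm_nonneg _) _), div_eq_mul_inv, ← hx, ← hy]
    rw [hGdef]
    simp only
    rw [hFdef, hKdef]
    simp only
    rw [Real.rpow_neg (norm_nonneg _)]
  -- main chain
  have main : (∫ x, ∫ y, u x * u y / ‖x - y‖ ^ ((N:ℝ) - 2 * s) ∂μ ∂μ)
      ≤ S * M ^ ((2 - p) / p) * D := by
    have s1 : (∫ x, ∫ y, u x * u y / ‖x - y‖ ^ ((N:ℝ) - 2 * s) ∂μ ∂μ)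
        ≤ ∫ x, ‖∫ y, u x * u y / ‖x - y‖ ^ ((N:ℝ) - 2 * s) ∂μ‖ ∂μ := by
      refine (le_abs_self _).trans ?_
      rw [← Real.norm_eq_abs]
      exact norm_integral_le_integral_norm _
    have s2 : (∫ x, ‖∫ y, u x * u y / ‖x - y‖ ^ ((N:ℝ) - 2 * s) ∂μ‖ ∂μ)
        ≤ ∫ x, (∫ y, G (x, y) ∂μ) ∂μ :=
      integral_mono_of_nonneg (Filter.Eventually.of_forall fun x => norm_nonneg _)
        hH_int hbound
    have s3 : (∫ x, (∫ y, G (x, y) ∂μ) ∂μ) = ∫ z, G z ∂ν :=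
      integral_integral (f := fun x y => G (x, y)) hG_int
    have s4 : (∫ z, G z ∂ν) ≤ (Ip * Ip) ^ (1 / p) * S := by
      have holder := integral_mul_le_Lp_mul_Lq_of_nonneg (μ := ν) hpq'
        (Filter.Eventually.of_forall hFnn) (Filter.Eventually.of_forall hKnn) hFMem hKMem
      rw [hFp_eq] at holder
      have hSint : (∫ z, K z ^ (p / (p - 1)) ∂ν) ^ (1 / (p / (p - 1))) = S := by
        rw [one_div_div, hS, ← hνrestrict]
      rw [hSint] at holder
      exact holder
    have s5 : (Ip * Ip) ^ (1 / p) * S ≤ S * M ^ ((2 - p) / p) * D := by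
      have hR0 : 0 ≤ D ^ (p / 2) * M ^ ((2 - p) / 2) :=
        mul_nonneg (Real.rpow_nonneg hD0.le _) (Real.rpow_nonneg hM0 _)
      have h1 : (Ip * Ip) ^ (1 / p)
          ≤ ((D ^ (p / 2) * M ^ ((2 - p) / 2)) * (D ^ (p / 2) * M ^ ((2 - p) / 2))) ^ (1 / p) :=
        Real.rpow_le_rpow (mul_nonneg hIp0 hIp0) (mul_le_mul hIp hIp hIp0 hR0) (by positivity)
      have hRR : (D ^ (p / 2) * M ^ ((2 - p) / 2)) * (D ^ (p / 2) * M ^ ((2 - p) / 2))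
          = D ^ p * M ^ (2 - p) := by
        rw [mul_mul_mul_comm, ← Real.rpow_add hD0, ← Real.rpow_add' hM0 (by positivity)]
        congr 1 <;> ring
      have h2 : ((D ^ (p / 2) * M ^ ((2 - p) / 2)) * (D ^ (p / 2) * M ^ ((2 - p) / 2))) ^ (1 / p)
          = D * M ^ ((2 - p) / p) := by
        rw [hRR, Real.mul_rpow (Real.rpow_nonneg hD0.le _) (Real.rpow_nonneg hM0 _),
          ← Real.rpow_mul hD0.le, ← Real.rpow_mul hM0, mul_one_div, mul_one_div,
          div_self hp0', Real.rpow_one]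
      calc (Ip * Ip) ^ (1 / p) * S ≤ (D * M ^ ((2 - p) / p)) * S :=
            mul_le_mul_of_nonneg_right (h1.trans_eq h2) hSnn
        _ = S * M ^ ((2 - p) / p) * D := by ring
    calc (∫ x, ∫ y, u x * u y / ‖x - y‖ ^ ((N:ℝ) - 2 * s) ∂μ ∂μ)
        ≤ ∫ x, ‖∫ y, u x * u y / ‖x - y‖ ^ ((N:ℝ) - 2 * s) ∂μ‖ ∂μ := s1
      _ ≤ ∫ x, (∫ y, G (x, y) ∂μ) ∂μ := s2
      _ = ∫ z, G z ∂ν := s3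
      _ ≤ (Ip * Ip) ^ (1 / p) * S := s4
      _ ≤ S * M ^ ((2 - p) / p) * D := s5
  show (∫ x, ∫ y, u x * u y / ‖x - y‖ ^ ((N:ℝ) - 2 * s) ∂μ ∂μ) / D ≤ S * M ^ ((2 - p) / p)
  rw [div_le_iff₀ hD0]
  exact main
end
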